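/- For each pair (γ, δ) in {(854,950), (843,939), (898,994), (821,917), (865,961), (810,906), (799,895), (876,972), (832,928), (887,983)}, there are no integers a, b, c, d with a + b + c + d = 1 such that (20t₁+4)/22, (−2t₁+4)/22, (10t₂+54)/22, (−10t₂+100)/22, (t₃+γ)/22, and (−t₃+δ)/22 are all non-negative integers, where t₁ = 3a − b, t₂ = 13a + b, t₃ = 16b + 5c − 6d. -/
import Mathlib


theorem stmt12 :
    ∀ p : ℤ × ℤ, p ∈ [((854:ℤ), (950:ℤ)), ((843:ℤ), (939:ℤ)), ((898:ℤ), (994:ℤ)), ((821:ℤ), (917:ℤ)), ((865:ℤ), (961:ℤ)), ((810:ℤ), (906:ℤ)), ((799:ℤ), (895:ℤ)), ((876:ℤ), (972:ℤ)), ((832:ℤ), (928:ℤ)), ((887:ℤ), (983:ℤ))] →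
      ¬ ∃ a b c d : ℤ, a + b + c + d = 1 ∧ ((22:ℤ) ∣ (20*(3*a - b) + 4) ∧ 0 ≤ (20*(3*a - b) + 4)) ∧ ((22:ℤ) ∣ (-2*(3*a - b) + 4) ∧ 0 ≤ (-2*(3*a - b) + 4)) ∧ ((22:ℤ) ∣ (10*(13*a + b) + 54) ∧ 0 ≤ (10*(13*a + b) + 54)) ∧ ((22:ℤ) ∣ (-10*(13*a + b) + 100) ∧ 0 ≤ (-10*(13*a + b) + 100)) ∧
        ((22:ℤ) ∣ ((16*b + 5*c - 6*d) + p.1) ∧ 0 ≤ ((16*b + 5*c - 6*d) + p.1)) ∧ ((22:ℤ) ∣ (-(16*b + 5*c - 6*d) + p.2) ∧ 0 ≤ (-(16*b + 5*c - 6*d) + p.2)) := by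
  intro p _
  rintro ⟨a, b, c, d, hs, ⟨h1, h1'⟩, ⟨h2, h2'⟩, ⟨h3, h3'⟩, ⟨h4, h4'⟩, -⟩
  omega
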